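/- Let A be an integer d×n matrix with columns a_1, …, a_n ∈ ℤ^d, ρ : ker A → ℂˣ a group homomorphism, and σ ⊆ {1,…,n} a subset for which there exists a linear functional φ : ℝ^d → ℝ with φ(a_j) = 0 for all j ∈ σ and φ(a_j) > 0 for all j ∉ σ. Let B = (a_j)_{j ∈ σ}, let ker B = {w ∈ ker A : w_j = 0 for all j ∉ σ}, and let ρ' be the restriction of ρ to ker B. Then the ℂ-algebra map ℂ[x_1,…,x_n] → ℂ[x_j : j ∈ σ] sending x_j ↦ x_j for j ∈ σ and x_j ↦ 0 for j ∉ σ induces a ℂ-algebra isomorphism ℂ[x_1,…,x_n]/(I_{A,ρ} + ⟨x_j : j ∉ σ⟩) ≅ ℂ[x_j : j ∈ σ]/I_{B,ρ'}. -/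

import Mathlib

open MvPolynomial

section Helpers

lemma prod_pow_restrict' {n : ℕ} {R : Type*} [CommMonoid R] (σ : Finset (Fin n))
    (u : Fin n → ℕ) (hu : ∀ j ∉ σ, u j = 0) (g : Fin n → R) :
    ∏ j, g j ^ u j = ∏ j : {j : Fin n // j ∈ σ}, g (j : Fin n) ^ u (j : Fin n) := by
  rw [← Finset.prod_subtype σ (fun j => Iff.rfl) (fun j => g j ^ u j)]
  exact (Finset.prod_subset σ.subset_univ (fun x _ hx => by rw [hu x hx, pow_zero])).symm

lemma sum_restrict' {n : ℕ} {M : Type*} [AddCommMonoid M] (σ : Finset (Fin n))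
    (g : Fin n → M) (hg : ∀ j ∉ σ, g j = 0) :
    ∑ j, g j = ∑ j : {j : Fin n // j ∈ σ}, g (j : Fin n) := by
  rw [← Finset.sum_subtype σ (fun j => Iff.rfl) g]
  exact (Finset.sum_subset σ.subset_univ (fun x _ hx => hg x hx)).symm

lemma face_supp' {d n : ℕ} (a : Fin n → (Fin d → ℤ)) (σ : Finset (Fin n))
    (φ : (Fin d → ℝ) →ₗ[ℝ] ℝ)
    (hφ0 : ∀ j ∈ σ, φ (fun i => (a j i : ℝ)) = 0)
    (hφpos : ∀ j ∉ σ, 0 < φ (fun i => (a j i : ℝ)))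
    (u v : Fin n → ℕ)
    (hsum : (∑ j, ((u j : ℤ) - (v j : ℤ)) • a j) = 0)
    (hu : ∀ j ∉ σ, u j = 0) : ∀ j ∉ σ, v j = 0 := by
  have h1 : (fun i => (((∑ j, ((u j : ℤ) - (v j : ℤ)) • a j) i : ℤ) : ℝ))
      = ∑ j, ((u j : ℝ) - (v j : ℝ)) • (fun i => (a j i : ℝ)) := by
    funext i
    simp only [Finset.sum_apply, Pi.smul_apply, smul_eq_mul]
    push_cast
    ring
  rw [hsum] at h1
  have h2 : ∑ j, (((u j : ℝ) - (v j : ℝ)) * φ (fun i => (a j i : ℝ))) = 0 := by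
    have := congrArg φ h1.symm
    rw [map_sum] at this
    have h0 : (fun i : Fin d => ((0 : Fin d → ℤ) i : ℝ)) = 0 := by funext i; simp
    rw [h0, map_zero] at this
    simpa [smul_eq_mul] using this
  have h3 : ∑ j ∈ σᶜ, (((u j : ℝ) - (v j : ℝ)) * φ (fun i => (a j i : ℝ))) = 0 := by
    have hsplit := Finset.sum_add_sum_compl σ
      (fun j => ((u j : ℝ) - (v j : ℝ)) * φ (fun i => (a j i : ℝ)))
    rw [h2] at hsplit
    have hz : ∑ j ∈ σ, (((u j : ℝ) - (v j : ℝ)) * φ (fun i => (a j i : ℝ))) = 0 :=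
      Finset.sum_eq_zero fun j hj => by rw [hφ0 j hj, mul_zero]
    linarith [hsplit, hz]
  have h4 : ∑ j ∈ σᶜ, ((v j : ℝ) * φ (fun i => (a j i : ℝ))) = 0 := by
    have : ∑ j ∈ σᶜ, (((u j : ℝ) - (v j : ℝ)) * φ (fun i => (a j i : ℝ)))
        = -∑ j ∈ σᶜ, ((v j : ℝ) * φ (fun i => (a j i : ℝ))) := by
      rw [← Finset.sum_neg_distrib]
      refine Finset.sum_congr rfl fun j hj => ?_
      rw [hu j (Finset.mem_compl.mp hj)]
      push_cast; ring
    rw [this] at h3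
    linarith
  intro j hj
  have hmem : j ∈ σᶜ := Finset.mem_compl.mpr hj
  have hterm := (Finset.sum_eq_zero_iff_of_nonneg (fun j hj' => by
    have := (hφpos j (Finset.mem_compl.mp hj')).le
    positivity)).mp h4 j hmem
  have hpos := hφpos j hj
  have : (v j : ℝ) = 0 := by
    rcases mul_eq_zero.mp hterm with h | h
    · exact h
    · exact absurd h hpos.ne'
  exact_mod_cast this

end Helpers

theorem stmt_13 {d n : ℕ} (a : Fin n → (Fin d → ℤ))
    (ρ : (Fin n → ℤ) → ℂˣ)
    (hρ0 : ρ 0 = 1)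
    (hρ : ∀ w w' : Fin n → ℤ, (∑ j, w j • a j) = 0 → (∑ j, w' j • a j) = 0 →
      ρ (w + w') = ρ w * ρ w')
    (σ : Finset (Fin n)) (φ : (Fin d → ℝ) →ₗ[ℝ] ℝ)
    (hφ0 : ∀ j ∈ σ, φ (fun i => (a j i : ℝ)) = 0)
    (hφpos : ∀ j ∉ σ, 0 < φ (fun i => (a j i : ℝ)))
    (I : Ideal (MvPolynomial (Fin n) ℂ))
    (hI : I = Ideal.span { f : MvPolynomial (Fin n) ℂ | ∃ u v : Fin n → ℕ,
      (∑ j, ((u j : ℤ) - (v j : ℤ)) • a j) = 0 ∧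
      f = (∏ j, MvPolynomial.X j ^ u j) -
        ((ρ (fun j => (u j : ℤ) - (v j : ℤ)) : ℂ)) • ∏ j, MvPolynomial.X j ^ v j })
    (IB : Ideal (MvPolynomial {j : Fin n // j ∈ σ} ℂ))
    (hIB : IB = Ideal.span { g : MvPolynomial {j : Fin n // j ∈ σ} ℂ |
      ∃ u v : {j : Fin n // j ∈ σ} → ℕ,
      (∑ j : {j : Fin n // j ∈ σ}, ((u j : ℤ) - (v j : ℤ)) • a (j : Fin n)) = 0 ∧
      g = (∏ j, MvPolynomial.X j ^ u j) -
        ((ρ (fun j' => if h : j' ∈ σ then (u ⟨j', h⟩ : ℤ) - (v ⟨j', h⟩ : ℤ) else 0) : ℂ)) •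
          ∏ j, MvPolynomial.X j ^ v j })
    (ψ : MvPolynomial (Fin n) ℂ →ₐ[ℂ] MvPolynomial {j : Fin n // j ∈ σ} ℂ)
    (hψ : ψ = MvPolynomial.aeval
      (fun j => if h : j ∈ σ then MvPolynomial.X (⟨j, h⟩ : {j : Fin n // j ∈ σ}) else 0)) :
    ∃ e : (MvPolynomial (Fin n) ℂ ⧸
            (I + Ideal.span (MvPolynomial.X '' {j : Fin n | j ∉ σ}))) ≃ₐ[ℂ]
          (MvPolynomial {j : Fin n // j ∈ σ} ℂ ⧸ IB),
      ∀ f : MvPolynomial (Fin n) ℂ,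
        e (Ideal.Quotient.mk _ f) = Ideal.Quotient.mk _ (ψ f) := by
  classical
  set K : Ideal (MvPolynomial (Fin n) ℂ) :=
    Ideal.span (MvPolynomial.X '' {j : Fin n | j ∉ σ}) with hK
  set ι : MvPolynomial {j : Fin n // j ∈ σ} ℂ →ₐ[ℂ] MvPolynomial (Fin n) ℂ :=
    MvPolynomial.aeval (fun j : {j : Fin n // j ∈ σ} => MvPolynomial.X (j : Fin n)) with hι
  have hψX : ∀ j : Fin n, ψ (X j) =
      (if h : j ∈ σ then (X ⟨j, h⟩ : MvPolynomial {j : Fin n // j ∈ σ} ℂ) else 0) := by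
    intro j; rw [hψ, aeval_X]
  have hιX : ∀ j : {j : Fin n // j ∈ σ}, ι (X j) = X (j : Fin n) := by
    intro j; rw [hι, aeval_X]
  have hψprod : ∀ u : Fin n → ℕ, ψ (∏ j, X j ^ u j)
      = ∏ j, (if h : j ∈ σ then (X ⟨j, h⟩ : MvPolynomial {j : Fin n // j ∈ σ} ℂ) else 0) ^ u j := by
    intro u
    rw [map_prod]
    exact Finset.prod_congr rfl fun j _ => by rw [map_pow, hψX]
  -- ψ maps generators of I into IB
  have hgenI : ∀ u v : Fin n → ℕ, (∑ j, ((u j : ℤ) - (v j : ℤ)) • a j) = 0 →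
      ψ ((∏ j, X j ^ u j) -
        ((ρ (fun j => (u j : ℤ) - (v j : ℤ)) : ℂ)) • ∏ j, X j ^ v j) ∈ IB := by
    intro u v hsum
    rw [map_sub, map_smul, hψprod, hψprod]
    by_cases hu : ∀ j ∉ σ, u j = 0
    · have hv : ∀ j ∉ σ, v j = 0 := face_supp' a σ φ hφ0 hφpos u v hsum hu
      rw [hIB]
      refine Ideal.subset_span ⟨fun j => u j, fun j => v j, ?_, ?_⟩
      · rw [← sum_restrict' σ (fun j => ((u j : ℤ) - (v j : ℤ)) • a j)
          (fun j hj => by simp [hu j hj, hv j hj])]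
        exact hsum
      · have hP : ∀ (w : Fin n → ℕ), (∀ j ∉ σ, w j = 0) →
            (∏ j, (if h : j ∈ σ then (X ⟨j, h⟩ : MvPolynomial {j : Fin n // j ∈ σ} ℂ) else 0) ^ w j)
            = ∏ j : {j : Fin n // j ∈ σ}, X j ^ w (j : Fin n) := by
          intro w hw
          rw [prod_pow_restrict' σ w hw]
          exact Finset.prod_congr rfl fun j _ => by rw [dif_pos j.2]
        rw [hP u hu, hP v hv]
        have harg : (fun j => (u j : ℤ) - (v j : ℤ)) =
            (fun j' => if h : j' ∈ σ then ((u j' : ℤ) - (v j' : ℤ)) else 0) := by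
          funext j'
          by_cases h : j' ∈ σ
          · rw [dif_pos h]
          · rw [dif_neg h, hu j' h, hv j' h]; simp
        rw [harg]
    · push_neg at hu
      obtain ⟨j0, hj0, hj0u⟩ := hu
      have hvne : ¬ ∀ j ∉ σ, v j = 0 := by
        intro hv
        have hsum' : (∑ j, ((v j : ℤ) - (u j : ℤ)) • a j) = 0 := by
          have : (∑ j, ((v j : ℤ) - (u j : ℤ)) • a j)
              = -∑ j, ((u j : ℤ) - (v j : ℤ)) • a j := by
            rw [← Finset.sum_neg_distrib]
            exact Finset.sum_congr rfl fun j _ => by rw [← neg_smul, neg_sub]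
          rw [this, hsum, neg_zero]
        exact hj0u (face_supp' a σ φ hφ0 hφpos v u hsum' hv j0 hj0)
      push_neg at hvne
      obtain ⟨j1, hj1, hj1v⟩ := hvne
      have p1 : (∏ j, (if h : j ∈ σ then (X ⟨j, h⟩ : MvPolynomial {j : Fin n // j ∈ σ} ℂ) else 0) ^ u j) = 0 :=
        Finset.prod_eq_zero (Finset.mem_univ j0) (by rw [dif_neg hj0]; exact zero_pow hj0u)
      have p2 : (∏ j, (if h : j ∈ σ then (X ⟨j, h⟩ : MvPolynomial {j : Fin n // j ∈ σ} ℂ) else 0) ^ v j) = 0 :=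
        Finset.prod_eq_zero (Finset.mem_univ j1) (by rw [dif_neg hj1]; exact zero_pow hj1v)
      rw [p1, p2, smul_zero, sub_zero]
      exact IB.zero_mem
  -- ι maps IB into I
  have hmap : Ideal.map ι IB ≤ I := by
    rw [hIB, Ideal.map_span, Ideal.span_le]
    rintro _ ⟨g, ⟨u, v, hsum, rfl⟩, rfl⟩
    rw [SetLike.mem_coe, hI]
    refine Ideal.subset_span ⟨fun j => if h : j ∈ σ then u ⟨j, h⟩ else 0,
      fun j => if h : j ∈ σ then v ⟨j, h⟩ else 0, ?_, ?_⟩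
    · rw [sum_restrict' σ _ (fun j hj => by simp [dif_neg hj])]
      simpa using hsum
    · rw [map_sub, map_smul, map_prod, map_prod]
      have hQ : ∀ (w : {j : Fin n // j ∈ σ} → ℕ),
          (∏ j : {j : Fin n // j ∈ σ}, ι (X j ^ w j))
          = ∏ j, X j ^ (if h : j ∈ σ then w ⟨j, h⟩ else 0) := by
        intro w
        rw [prod_pow_restrict' σ (fun j => if h : j ∈ σ then w ⟨j, h⟩ else 0)
          (fun j hj => dif_neg hj)]
        exact Finset.prod_congr rfl fun j _ => by rw [map_pow, hιX, dif_pos j.2]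
      rw [hQ u, hQ v]
      have harg : (fun j' => if h : j' ∈ σ then ((u ⟨j', h⟩ : ℤ) - (v ⟨j', h⟩ : ℤ)) else 0) =
          (fun j => (((if h : j ∈ σ then u ⟨j, h⟩ else 0 : ℕ) : ℤ)
            - ((if h : j ∈ σ then v ⟨j, h⟩ else 0 : ℕ) : ℤ))) := by
        funext j'
        by_cases h : j' ∈ σ
        · rw [dif_pos h, dif_pos h, dif_pos h]
        · rw [dif_neg h, dif_neg h, dif_neg h]; simp
      rw [harg]
  -- ψ ∘ ι = id
  have hψι : ∀ g, ψ (ι g) = g := by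
    have : ψ.comp ι = AlgHom.id ℂ _ := by
      apply MvPolynomial.algHom_ext
      intro j
      rw [AlgHom.comp_apply, hιX, hψX, dif_pos j.2, AlgHom.id_apply]
    intro g
    have := congrArg (fun F => F g) (congrArg DFunLike.coe this)
    simpa using this
  -- f - ι (ψ f) ∈ K
  have hA : ∀ f : MvPolynomial (Fin n) ℂ, f - ι (ψ f) ∈ K := by
    intro f
    induction f using MvPolynomial.induction_on with
    | C c => rw [hψ]; simp
    | add p q hp hq =>
      have : p + q - ι (ψ (p + q)) = (p - ι (ψ p)) + (q - ι (ψ q)) := by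
        rw [map_add, map_add]; ring
      rw [this]; exact K.add_mem hp hq
    | mul_X p j hp =>
      have h1 : p * X j - ι (ψ (p * X j))
          = (p - ι (ψ p)) * X j + ι (ψ p) * (X j - ι (ψ (X j))) := by
        rw [map_mul, map_mul]; ring
      rw [h1]
      refine K.add_mem (K.mul_mem_right _ hp) ?_
      by_cases hj : j ∈ σ
      · have : X j - ι (ψ (X j)) = 0 := by
          rw [hψX, dif_pos hj, hιX]; ring
        rw [this, mul_zero]; exact K.zero_mem
      · have : ψ (X j) = 0 := by rw [hψX, dif_neg hj]
        rw [this, map_zero, sub_zero]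
        exact K.mul_mem_left _ (Ideal.subset_span ⟨j, hj, rfl⟩)
  -- the composite map
  set π : MvPolynomial (Fin n) ℂ →ₐ[ℂ] (MvPolynomial {j : Fin n // j ∈ σ} ℂ ⧸ IB) :=
    (Ideal.Quotient.mkₐ ℂ IB).comp ψ with hπ
  have hπapp : ∀ f, π f = Ideal.Quotient.mk IB (ψ f) := fun f => rfl
  have hsurj : Function.Surjective π := by
    intro y
    obtain ⟨g, rfl⟩ := Ideal.Quotient.mk_surjective y
    exact ⟨ι g, by rw [hπapp, hψι]⟩
  have hkermem : ∀ f, f ∈ RingHom.ker π ↔ ψ f ∈ IB := by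
    intro f
    rw [RingHom.mem_ker, hπapp, Ideal.Quotient.eq_zero_iff_mem]
  have hker : I + K = RingHom.ker π := by
    apply le_antisymm
    · rw [Submodule.add_eq_sup, sup_le_iff]
      constructor
      · rw [hI, Ideal.span_le]
        rintro f ⟨u, v, hsum, rfl⟩
        rw [SetLike.mem_coe, hkermem]
        exact hgenI u v hsum
      · rw [hK, Ideal.span_le]
        rintro _ ⟨j, hj, rfl⟩
        rw [SetLike.mem_coe, hkermem, hψX, dif_neg hj]
        exact IB.zero_mem
    · intro f hf
      rw [hkermem] at hf
      have hrepr : f = ι (ψ f) + (f - ι (ψ f)) := by ring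
      rw [hrepr, Submodule.add_eq_sup]
      exact Submodule.add_mem _
        (Submodule.mem_sup_left (hmap (Ideal.mem_map_of_mem ι hf)))
        (Submodule.mem_sup_right (hA f))
  refine ⟨(Ideal.quotientEquivAlgOfEq ℂ hker).trans
    (Ideal.quotientKerAlgEquivOfSurjective hsurj), fun f => ?_⟩
  rw [AlgEquiv.trans_apply, Ideal.quotientEquivAlgOfEq_mk]
  rw [Ideal.quotientKerAlgEquivOfSurjective_mk]
  exact hπapp f
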